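/- Every complex root of the polynomial h(x) = x^4 - (131/100) x^3 + (12409/14400) x^2 - (131/100) x + 1 has absolute value 1. -/

import Mathlib

theorem h8_roots_on_unit_circle (z : ℂ)
    (hz : z ^ 4 - (131/100) * z^3 + (12409/14400) * z^2 - (131/100) * z + 1 = 0) :
    ‖z‖ = 1 := by
  have hz0 : z ≠ 0 := by
    intro h; rw [h] at hz; norm_num at hz
  set w : ℂ := z + z⁻¹ with hwdef
  have h1 : z * z⁻¹ = 1 := mul_inv_cancel₀ hz0
  have hw : w ^ 2 = 131/100 * w + 16391/14400 := by
    have key : (w ^ 2 - (131/100 * w + 16391/14400)) * z ^ 2 = 0 := by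
      rw [hwdef]
      linear_combination hz + (2*z^2 + z*z⁻¹ + 1 - 131/100*z) * h1
    have := mul_eq_zero.1 key
    rcases this with h | h
    · linear_combination h
    · exact absurd (pow_eq_zero_iff (by norm_num)|>.1 h) hz0
  set u : ℂ := w - 131/200 with hudef
  have hu : u ^ 2 = 8816/5625 := by
    rw [hudef]; ring_nf; linear_combination hw
  -- u is real
  have huim : u.im = 0 := by
    have h1 : (u ^ 2).im = 0 := by rw [hu]; norm_num
    have h2 : (u ^ 2).re = 8816/5625 := by rw [hu]; norm_num
    simp [Complex.sq_norm, pow_two, Complex.mul_im, Complex.mul_re] at h1 h2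
    rcases mul_eq_zero.1 (by linarith : u.re * u.im = 0) with h | h
    · nlinarith [sq_nonneg u.im]
    · exact h
  have hure : u.re ^ 2 = 8816/5625 := by
    have h2 : (u ^ 2).re = 8816/5625 := by rw [hu]; norm_num
    simp [pow_two, Complex.mul_re, huim] at h2 ⊢
    linarith
  have hwim : w.im = 0 := by
    have : w.im = u.im := by rw [hudef]; simp
    rw [this, huim]
  set a : ℝ := w.re with hadef
  have hwa : w = (a : ℂ) := by
    apply Complex.ext <;> simp [hadef, hwim]
  have hare : a = u.re + 131/200 := by
    rw [hadef, hudef]; simp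
  have ha4 : a ^ 2 < 4 := by
    rw [hare]
    nlinarith [hure, sq_nonneg (u.re - 3/2), sq_nonneg (u.re + 3/2)]
  -- z^2 + 1 = w * z
  have hq : z ^ 2 + 1 = (a : ℂ) * z := by
    rw [← hwa, hwdef]
    field_simp
  have hre : z.re ^ 2 - z.im ^ 2 + 1 = a * z.re := by
    have := congrArg Complex.re hq
    simpa [pow_two, Complex.mul_re, Complex.mul_im] using this
  have him : 2 * (z.re * z.im) = a * z.im := by
    have := congrArg Complex.im hq
    simp [pow_two, Complex.mul_re, Complex.mul_im] at this
    linarith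
  have hsum : z.re ^ 2 + z.im ^ 2 = 1 := by
    rcases eq_or_ne z.im 0 with hy | hy
    · exfalso
      rw [hy] at hre
      nlinarith [sq_nonneg (z.re - a/2)]
    · have ha2 : a = 2 * z.re := by
        have hfac : z.im * (2 * z.re - a) = 0 := by linear_combination him
        rcases mul_eq_zero.1 hfac with h' | h'
        · exact absurd h' hy
        · linarith
      rw [ha2] at hre; nlinarith
  have : ‖z‖ ^ 2 = 1 := by
    rw [Complex.sq_norm, Complex.normSq_apply]; nlinarith
  nlinarith [norm_nonneg z, this]
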